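/- (Planar version of Remark 5.2: multiplicative sprays preserve the class 𝒪_Δ(S,u).) Let n ≥ 3, let Ω ⊆ ℂ be open, let P ⊂ Ω be finite, let E₀ ⊆ P, and let r ∈ ℕ. Let u = (u₁,…,uₙ) : Ω \ E₀ → ℂⁿ be holomorphic with values in 𝔖*, each component meromorphic at every p ∈ E₀; for p ∈ P set d(p) = r + Σᵢ max(0, pole order of uᵢ at p). Let g : Ω → ℂ be holomorphic with |g(z)| < 1 for all z ∈ Ω and vanishing to order at least d(p) at every p ∈ P. Let (s₁,s₂,s₃) ∈ 𝒮₂(𝔻), and let v = (v₁,…,vₙ) : Ω \ E₀ → ℂⁿ be holomorphic with values in 𝔖*, each component meromorphic at every p ∈ E₀, such that for every i the difference vᵢ − uᵢ extends holomorphically across E₀ and vanishes to order at least r at every p ∈ P. Then the map w := ((s₁∘g)·v₁, (s₂∘g)·v₂, (s₃∘g)·v₃, …, (s₃∘g)·vₙ) is holomorphic on Ω \ E₀ with values in 𝔖*, each component of w is meromorphic at every p ∈ E₀, and for every i the difference wᵢ − uᵢ extends holomorphically across E₀ and vanishes to order at least r at every p ∈ P. -/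

import Mathlib

open Complex Filter
open scoped Topology

noncomputable section

/-- The punctured quadric `𝔖* = {u ∈ ℂⁿ \ {0} : u₁u₂ = u₃² + … + uₙ²}`. -/
def SStar (n : ℕ) (hn : 2 ≤ n) : Set (Fin n → ℂ) :=
  {u | u ≠ 0 ∧ u ⟨0, by omega⟩ * u ⟨1, by omega⟩ =
      ∑ j : Fin n, if 2 ≤ (j : ℕ) then u j ^ 2 else 0}

/-- `f` extends meromorphically to the point `p`. -/
def MeromAt (f : ℂ → ℂ) (p : ℂ) : Prop :=
  ∃ (m : ℕ) (g : ℂ → ℂ), AnalyticAt ℂ g p ∧ ∀ᶠ z in 𝓝[≠] p, f z = g z / (z - p) ^ m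

/-- `f` is holomorphic near `p` and vanishes there to order at least `r`. -/
def VanishesToOrder (f : ℂ → ℂ) (p : ℂ) (r : ℕ) : Prop :=
  ∃ g : ℂ → ℂ, AnalyticAt ℂ g p ∧ ∀ᶠ z in 𝓝 p, f z = (z - p) ^ r * g z

/-- `f` (possibly undefined at `p`) extends holomorphically across `p` with a zero of
order at least `r` there. -/
def ExtVanishes (f : ℂ → ℂ) (p : ℂ) (r : ℕ) : Prop :=
  ∃ g : ℂ → ℂ, AnalyticAt ℂ g p ∧ ∀ᶠ z in 𝓝[≠] p, f z = (z - p) ^ r * g z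

/-- `(s₁,s₂,s₃)` belongs to the class `𝒮₂(𝔻)`. -/
def InS2 (s₁ s₂ s₃ : ℂ → ℂ) : Prop :=
  DifferentiableOn ℂ s₁ (Metric.ball 0 1) ∧ DifferentiableOn ℂ s₂ (Metric.ball 0 1) ∧
  DifferentiableOn ℂ s₃ (Metric.ball 0 1) ∧
  (∀ z ∈ Metric.ball (0 : ℂ) 1, s₁ z ≠ 0 ∧ s₂ z ≠ 0 ∧ s₃ z ≠ 0 ∧
    s₁ z * s₂ z = s₃ z ^ 2) ∧
  s₁ 0 = 1 ∧ s₂ 0 = 1 ∧ s₃ 0 = 1 ∧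
  deriv s₁ 0 * deriv s₂ 0 ≠ 0 ∧
  ((∀ z ∈ Metric.ball (0 : ℂ) 1, s₃ z = 1) ∨ deriv s₃ 0 ≠ 0)

private lemma fac_zero {f : ℂ → ℂ} (hf : AnalyticAt ℂ f 0) (h0 : f 0 = 0) :
    ∃ T : ℂ → ℂ, AnalyticAt ℂ T 0 ∧ ∀ x, f x = x * T x := by
  obtain ⟨p, hp⟩ := hf
  refine ⟨dslope f 0, ⟨p.fslope, hp.has_fpower_series_dslope_fslope⟩, fun x => ?_⟩
  have h := sub_smul_dslope f 0 x
  simp only [sub_zero, h0, smul_eq_mul] at h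
  exact h.symm

def ExtVanishes' (f : ℂ → ℂ) (p : ℂ) (r : ℕ) : Prop :=
  ∃ g : ℂ → ℂ, AnalyticAt ℂ g p ∧ ∀ᶠ z in 𝓝[≠] p, f z = (z - p) ^ r * g z

private lemma key_lemma {n : ℕ} (Ω : Set ℂ) (hΩ : IsOpen Ω) (p : ℂ) (hpΩ : p ∈ Ω)
    (r : ℕ) (u v : ℂ → Fin n → ℂ) (i : Fin n) (op : Fin n → ℕ)
    (h : ℂ → ℂ) (hh : AnalyticAt ℂ h p)
    (hhe : ∀ᶠ z in 𝓝[≠] p, u z i = h z / (z - p) ^ op i)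
    (g : ℂ → ℂ) (hg : DifferentiableOn ℂ g Ω)
    (hg1 : ∀ z ∈ Ω, ‖g z‖ < 1)
    (hgv : ∃ H : ℂ → ℂ, AnalyticAt ℂ H p ∧
      ∀ᶠ z in 𝓝 p, g z = (z - p) ^ (r + ∑ j, op j) * H z)
    (s : ℂ → ℂ) (hsd : DifferentiableOn ℂ s (Metric.ball 0 1)) (hs1 : s 0 = 1)
    (A : ℂ → ℂ) (hA : AnalyticAt ℂ A p)
    (hAe : ∀ᶠ z in 𝓝[≠] p, v z i - u z i = (z - p) ^ r * A z) :
    ∃ G : ℂ → ℂ, AnalyticAt ℂ G p ∧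
      ∀ᶠ z in 𝓝[≠] p, s (g z) * v z i - u z i = (z - p) ^ r * G z := by
  set d := r + ∑ j, op j with hd_def
  obtain ⟨H, hH, hHe⟩ := hgv
  have hgb : g p ∈ Metric.ball (0 : ℂ) 1 := by
    simpa [Metric.mem_ball, Complex.dist_eq] using hg1 p hpΩ
  have hga : AnalyticAt ℂ g p := hg.analyticAt (hΩ.mem_nhds hpΩ)
  have hsg : AnalyticAt ℂ (fun z => s (g z)) p :=
    (hsd.analyticAt (Metric.isOpen_ball.mem_nhds hgb)).comp hga
  -- factor s∘g - 1
  have hC : ∃ C : ℂ → ℂ, AnalyticAt ℂ C p ∧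
      ∀ᶠ z in 𝓝 p, s (g z) - 1 = (z - p) ^ d * C z := by
    by_cases hd0 : d = 0
    · exact ⟨fun z => s (g z) - 1, hsg.sub analyticAt_const, by
        filter_upwards with z; simp [hd0]⟩
    · have gp0 : g p = 0 := by
        have := hHe.self_of_nhds
        simpa [zero_pow hd0] using this
      have hS : AnalyticAt ℂ (fun x => s x - 1) 0 := by
        rw [← gp0]
        exact (hsd.analyticAt (Metric.isOpen_ball.mem_nhds hgb)).sub analyticAt_const
      obtain ⟨T, hT, hTe⟩ := fac_zero hS (by simp [hs1])
      refine ⟨fun z => H z * T (g z), hH.mul ((gp0 ▸ hT).comp hga), ?_⟩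
      filter_upwards [hHe] with z hz
      rw [hTe (g z), hz]; ring
  obtain ⟨C, hCa, hCe⟩ := hC
  have hle : op i ≤ ∑ j, op j :=
    Finset.single_le_sum (fun _ _ => Nat.zero_le _) (Finset.mem_univ i)
  set e := (∑ j, op j) - op i with he_def
  have hde : d = r + op i + e := by omega
  refine ⟨fun z => s (g z) * A z + (z - p) ^ e * (C z * h z),
    (hsg.mul hA).add ((((analyticAt_id).sub analyticAt_const).pow e).mul (hCa.mul hh)),
    ?_⟩
  filter_upwards [hAe, hhe, hCe.filter_mono nhdsWithin_le_nhds, self_mem_nhdsWithin]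
    with z hA' hh' hC' hz
  have hzp : z - p ≠ 0 := sub_ne_zero.mpr hz
  have expand : s (g z) * v z i - u z i
      = s (g z) * (v z i - u z i) + (s (g z) - 1) * u z i := by ring
  rw [expand, hA', hh', hC', hde]
  field_simp
  ring

/-- planar version of Remark 5.2: multiplicative sprays preserve the class
`𝒪_Δ(S,u)`.  With `u, v` holomorphic `𝔖*`-valued maps off `E₀`, meromorphic at `E₀`,
`v − u` vanishing to order at least `r` at every point of `P`, `g` holomorphic with
`|g| < 1` vanishing to order at least `d(p) = r + Σᵢ (pole order of uᵢ at p)` at every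
`p ∈ P`, and `(s₁,s₂,s₃) ∈ 𝒮₂(𝔻)`, the map
`w = ((s₁∘g)·v₁, (s₂∘g)·v₂, (s₃∘g)·v₃, …, (s₃∘g)·vₙ)` is again a holomorphic
`𝔖*`-valued map off `E₀`, meromorphic at `E₀`, with `w − u` vanishing to order at least
`r` at every point of `P`. -/
theorem statement_14 (n : ℕ) (hn : 3 ≤ n) (Ω : Set ℂ) (hΩ : IsOpen Ω)
    (P E₀ : Finset ℂ) (hPΩ : ↑P ⊆ Ω) (hE₀P : E₀ ⊆ P) (r : ℕ)
    (u : ℂ → Fin n → ℂ)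
    (hu : ∀ i, DifferentiableOn ℂ (fun z => u z i) (Ω \ ↑E₀))
    (huS : ∀ z ∈ Ω \ (↑E₀ : Set ℂ), u z ∈ SStar n (by omega))
    (hum : ∀ p ∈ E₀, ∀ i, MeromAt (fun z => u z i) p)
    (ord : ℂ → Fin n → ℕ)
    (hord : ∀ p ∈ P, ∀ i, ∃ g : ℂ → ℂ, AnalyticAt ℂ g p ∧
      (∀ᶠ z in 𝓝[≠] p, u z i = g z / (z - p) ^ (ord p i)) ∧ (ord p i ≠ 0 → g p ≠ 0))
    (g : ℂ → ℂ) (hg : DifferentiableOn ℂ g Ω)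
    (hg1 : ∀ z ∈ Ω, ‖g z‖ < 1)
    (hgv : ∀ p ∈ P, VanishesToOrder g p (r + ∑ i, ord p i))
    (s₁ s₂ s₃ : ℂ → ℂ) (hs : InS2 s₁ s₂ s₃)
    (v : ℂ → Fin n → ℂ)
    (hv : ∀ i, DifferentiableOn ℂ (fun z => v z i) (Ω \ ↑E₀))
    (hvS : ∀ z ∈ Ω \ (↑E₀ : Set ℂ), v z ∈ SStar n (by omega))
    (hvm : ∀ p ∈ E₀, ∀ i, MeromAt (fun z => v z i) p)
    (hvu : ∀ p ∈ P, ∀ i, ExtVanishes (fun z => v z i - u z i) p r)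
    (w : ℂ → Fin n → ℂ)
    (hw : ∀ z i, w z i = (if (i : ℕ) = 0 then s₁ (g z)
        else if (i : ℕ) = 1 then s₂ (g z) else s₃ (g z)) * v z i) :
    (∀ i, DifferentiableOn ℂ (fun z => w z i) (Ω \ ↑E₀)) ∧
    (∀ z ∈ Ω \ (↑E₀ : Set ℂ), w z ∈ SStar n (by omega)) ∧
    (∀ p ∈ E₀, ∀ i, MeromAt (fun z => w z i) p) ∧
    (∀ p ∈ P, ∀ i, ExtVanishes (fun z => w z i - u z i) p r) := by
  obtain ⟨hd1, hd2, hd3, hnz, h10, h20, h30, -, -⟩ := hs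
  classical
  set S : Fin n → (ℂ → ℂ) :=
    fun i => if (i : ℕ) = 0 then s₁ else if (i : ℕ) = 1 then s₂ else s₃ with hS_def
  have hwS : ∀ z i, w z i = S i (g z) * v z i := by
    intro z i
    rw [hw, hS_def]
    by_cases h0 : (i : ℕ) = 0 <;> by_cases h1 : (i : ℕ) = 1 <;> simp [h0, h1]
  have hSd : ∀ i, DifferentiableOn ℂ (S i) (Metric.ball 0 1) := by
    intro i; rw [hS_def]; dsimp only; split_ifs <;> assumption
  have hS0 : ∀ i, S i 0 = 1 := by
    intro i; rw [hS_def]; dsimp only; split_ifs <;> assumption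
  have hSnz : ∀ (i : Fin n), ∀ x ∈ Metric.ball (0 : ℂ) 1, S i x ≠ 0 := by
    intro i x hx; rw [hS_def]; dsimp only; split_ifs
    exacts [(hnz x hx).1, (hnz x hx).2.1, (hnz x hx).2.2.1]
  have hball : ∀ z ∈ Ω, g z ∈ Metric.ball (0 : ℂ) 1 := by
    intro z hz; simpa [Metric.mem_ball, Complex.dist_eq] using hg1 z hz
  refine ⟨?_, ?_, ?_, ?_⟩
  · -- differentiability
    intro i
    simp only [hwS]
    exact ((hSd i).comp (hg.mono Set.diff_subset)
      (fun z hz => hball z hz.1)).mul (hv i)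
  · -- values in SStar
    intro z hz
    have hgb := hball z hz.1
    obtain ⟨hv0, hveq⟩ := hvS z hz
    constructor
    · intro hcontra
      apply hv0
      funext i
      have := congrFun hcontra i
      rw [hwS] at this
      simp only [Pi.zero_apply] at this ⊢
      exact (mul_eq_zero.mp this).resolve_left (hSnz i _ hgb)
    · have hq := (hnz (g z) hgb).2.2.2
      have hsum : ∀ j : Fin n, (if 2 ≤ (j : ℕ) then w z j ^ 2 else 0)
          = s₃ (g z) ^ 2 * (if 2 ≤ (j : ℕ) then v z j ^ 2 else 0) := by
        intro j
        by_cases hj : 2 ≤ (j : ℕ)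
        · have hj0 : (j : ℕ) ≠ 0 := by omega
          have hj1 : (j : ℕ) ≠ 1 := by omega
          simp only [hj, if_true, hwS, hS_def, hj0, hj1, if_false]
          ring
        · simp [hj]
      rw [Finset.sum_congr rfl (fun j _ => hsum j), ← Finset.mul_sum, ← hveq]
      rw [hwS, hwS, hS_def]
      have e0 : ((⟨0, by omega⟩ : Fin n) : ℕ) = 0 := rfl
      have e1 : ((⟨1, by omega⟩ : Fin n) : ℕ) = 1 := rfl
      simp only [e0, e1, if_true, if_false, one_ne_zero, Nat.zero_ne_one]
      linear_combination (v z ⟨0, by omega⟩ * v z ⟨1, by omega⟩) * hq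
  · -- meromorphic at E₀
    intro p hp i
    have hpΩ : p ∈ Ω := hPΩ (hE₀P hp)
    obtain ⟨m, h, hh, hhe⟩ := hvm p hp i
    have hga : AnalyticAt ℂ g p := hg.analyticAt (hΩ.mem_nhds hpΩ)
    have hsg : AnalyticAt ℂ (fun z => S i (g z)) p :=
      ((hSd i).analyticAt (Metric.isOpen_ball.mem_nhds (hball p hpΩ))).comp hga
    refine ⟨m, fun z => S i (g z) * h z, hsg.mul hh, ?_⟩
    filter_upwards [hhe] with z hz
    rw [hwS, hz, mul_div_assoc]
  · -- ExtVanishes at P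
    intro p hp i
    have hpΩ : p ∈ Ω := hPΩ hp
    obtain ⟨h, hh, hhe, -⟩ := hord p hp i
    obtain ⟨A, hA, hAe⟩ := hvu p hp i
    obtain ⟨G, hG, hGe⟩ := key_lemma Ω hΩ p hpΩ r u v i (ord p) h hh hhe g hg hg1
      (hgv p hp) (S i) (hSd i) (hS0 i) A hA hAe
    refine ⟨G, hG, ?_⟩
    filter_upwards [hGe] with z hz
    rw [hwS, hz]
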